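/- Let f be a holomorphic function of one complex variable defined on a neighborhood of 0 ∈ ℂ with f(0) ≠ 0, and let H(x,y) = ( x(1 + x²y f(x²y)), y(1 + x²y f(x²y))⁻¹ ), a germ of holomorphic diffeomorphism of (ℂ²,0) tangent to the identity. Then the pseudogroup generated by H has finite orbits on a sufficiently small neighborhood of the origin, yet H is not periodic: no iterate Hᴺ with N ≥ 1 coincides with the identity on a neighborhood of the origin; in particular H generates an infinite subgroup of Diff(ℂ²,0). -/

import Mathlib

open Filter Topology

set_option maxHeartbeats 4000000

/-- The local map associated to a letter of a word in the generators of a pseudogroup: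
`(i, true)` acts by the generator `f i` and `(i, false)` by its (local) inverse `fInv i`. -/
def letterMap {ι α : Type*} (f fInv : ι → α → α) : ι × Bool → α → α :=
  fun l => if l.2 then f l.1 else fInv l.1

/-- Evaluation of the word `F = F_s ∘ … ∘ F₁` (letters are applied from the left of the
list onwards). -/
def wordEval {ι α : Type*} (f fInv : ι → α → α) : List (ι × Bool) → α → α
  | [], x => x
  | l :: w, x => wordEval f fInv w (letterMap f fInv l x)

/-- `x` belongs to the domain, relative to `V`, of the word `F = F_s ∘ … ∘ F₁` viewed as
an element of the pseudogroup generated on `V`: the point `x` and all its successive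
images stay in `V`. -/
def inDom {ι α : Type*} (V : Set α) (f fInv : ι → α → α) : List (ι × Bool) → α → Prop
  | [], x => x ∈ V
  | l :: w, x => x ∈ V ∧ inDom V f fInv w (letterMap f fInv l x)

/-- The `V`-orbit of `p` under the pseudogroup generated by the `f i`'s and their
inverses `fInv i` on `V`. -/
def pOrbit {ι α : Type*} (V : Set α) (f fInv : ι → α → α) (p : α) : Set α :=
  {q | ∃ w : List (ι × Bool), inDom V f fInv w p ∧ wordEval f fInv w p = q}

/-- The germ of diffeomorphism
`H(x,y) = (x(1 + x²y f(x²y)), y(1 + x²y f(x²y))⁻¹)` of `(ℂ²,0)`. -/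
noncomputable def Hmap (f : ℂ → ℂ) : ℂ × ℂ → ℂ × ℂ :=
  fun p => (p.1 * (1 + p.1 ^ 2 * p.2 * f (p.1 ^ 2 * p.2)),
            p.2 * (1 + p.1 ^ 2 * p.2 * f (p.1 ^ 2 * p.2))⁻¹)

lemma wordEval_mem {ι α : Type*} (V : Set α) (g gInv : ι → α → α) :
    ∀ (w : List (ι × Bool)) (q : α), inDom V g gInv w q → wordEval g gInv w q ∈ V
  | [], _, h => h
  | _ :: w, _, h => wordEval_mem V g gInv w _ h.2

lemma fixed_wordEval {ι α : Type*} (g gInv : ι → α → α) (q : α)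
    (h1 : ∀ i : ι, g i q = q) (h2 : ∀ i : ι, gInv i q = q) :
    ∀ w : List (ι × Bool), wordEval g gInv w q = q
  | [] => rfl
  | (i, b) :: w => by
      have : letterMap g gInv (i, b) q = q := by
        cases b <;> simp [letterMap, h1, h2]
      rw [wordEval, this, fixed_wordEval g gInv q h1 h2 w]

lemma good_step {α : Type*} (V : Set α) (H HInv : α → α)
    (hli : ∀ p ∈ V, HInv (H p) = p) (hri : ∀ p ∈ V, H (HInv p) = p) (p : α) :
    ∀ (w : List (Fin 1 × Bool)) (q : α), inDom V (fun _ => H) (fun _ => HInv) w q →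
      ((∃ k, (∀ j, j < k → H^[j] p ∈ V) ∧ q = H^[k] p) ∨
       (∃ k, (∀ j, j < k → HInv^[j] p ∈ V) ∧ q = HInv^[k] p)) →
      ((∃ k, (∀ j, j < k → H^[j] p ∈ V) ∧
          wordEval (fun _ => H) (fun _ => HInv) w q = H^[k] p) ∨
       (∃ k, (∀ j, j < k → HInv^[j] p ∈ V) ∧
          wordEval (fun _ => H) (fun _ => HInv) w q = HInv^[k] p)) := by
  intro w
  induction w with
  | nil => intro q _ hg; exact hg
  | cons l w ih =>
    intro q hdom hg
    obtain ⟨hqV, hrest⟩ := hdom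
    refine ih _ hrest ?_
    obtain ⟨i, b⟩ := l
    cases b with
    | true =>
      have hl : letterMap (fun _ : Fin 1 => H) (fun _ => HInv) (i, true) q = H q := rfl
      rw [hl]
      rcases hg with ⟨k, ch, rfl⟩ | ⟨k, ch, hq⟩
      · left
        exact ⟨k + 1, fun j hj => by
          rcases Nat.lt_succ_iff_lt_or_eq.mp hj with h | h
          · exact ch j h
          · subst h; exact hqV, (Function.iterate_succ_apply' H k p).symm⟩
      · cases k with
        | zero =>
          simp only [Function.iterate_zero, id] at hq
          subst hq
          left
          refine ⟨1, fun j hj => ?_, ?_⟩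
          · interval_cases j; simpa using hqV
          · simp
        | succ k' =>
          right
          refine ⟨k', fun j hj => ch j (hj.trans (Nat.lt_succ_self k')), ?_⟩
          have hmem : HInv^[k'] p ∈ V := ch k' (Nat.lt_succ_self k')
          rw [hq, Function.iterate_succ_apply', hri _ hmem]
    | false =>
      have hl : letterMap (fun _ : Fin 1 => H) (fun _ => HInv) (i, false) q = HInv q := rfl
      rw [hl]
      rcases hg with ⟨k, ch, hq⟩ | ⟨k, ch, rfl⟩
      · cases k with
        | zero =>
          simp only [Function.iterate_zero, id] at hq
          subst hq
          right
          refine ⟨1, fun j hj => ?_, ?_⟩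
          · interval_cases j; simpa using hqV
          · simp
        | succ k' =>
          left
          refine ⟨k', fun j hj => ch j (hj.trans (Nat.lt_succ_self k')), ?_⟩
          have hmem : H^[k'] p ∈ V := ch k' (Nat.lt_succ_self k')
          rw [hq, Function.iterate_succ_apply', hli _ hmem]
      · right
        exact ⟨k + 1, fun j hj => by
          rcases Nat.lt_succ_iff_lt_or_eq.mp hj with h | h
          · exact ch j h
          · subst h; exact hqV, (Function.iterate_succ_apply' HInv k p).symm⟩

lemma parabolic_key (f : ℂ → ℂ) (hc : ContinuousAt f 0) : ∀ N : ℕ,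
    Tendsto (fun u : ℂ => ((fun v : ℂ => v * (1 + v * f v))^[N] u - u) / u ^ 2) (𝓝[≠] 0)
      (𝓝 ((N : ℂ) * f 0)) ∧
    Tendsto (fun u : ℂ => (fun v : ℂ => v * (1 + v * f v))^[N] u / u) (𝓝[≠] 0) (𝓝 1) := by
  set φ : ℂ → ℂ := fun v => v * (1 + v * f v) with hφ
  have key : ∀ N : ℕ,
      Tendsto (fun u : ℂ => (φ^[N] u - u) / u ^ 2) (𝓝[≠] 0) (𝓝 ((N : ℂ) * f 0)) := by
    intro N
    induction N with
    | zero =>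
      have : (fun u : ℂ => (φ^[0] u - u) / u ^ 2) = fun _ => 0 := by
        funext u; simp
      rw [this]
      simpa using tendsto_const_nhds
    | succ N ih =>
      -- auxiliary limits
      have haux : Tendsto (fun u : ℂ => φ^[N] u / u) (𝓝[≠] 0) (𝓝 1) := by
        have h1 : Tendsto (fun u : ℂ => 1 + u * ((φ^[N] u - u) / u ^ 2)) (𝓝[≠] 0)
            (𝓝 (1 + 0 * ((N : ℂ) * f 0))) := by
          exact tendsto_const_nhds.add
            ((tendsto_nhdsWithin_of_tendsto_nhds tendsto_id).mul ih)
        rw [show (1 : ℂ) + 0 * ((N : ℂ) * f 0) = 1 by ring] at h1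
        refine h1.congr' ?_
        filter_upwards [self_mem_nhdsWithin] with u hu
        have hu' : u ≠ 0 := hu
        field_simp
        ring
      have hv0 : Tendsto (fun u : ℂ => φ^[N] u) (𝓝[≠] 0) (𝓝 0) := by
        have h1 : Tendsto (fun u : ℂ => (φ^[N] u / u) * u) (𝓝[≠] 0) (𝓝 (1 * 0)) :=
          haux.mul (tendsto_nhdsWithin_of_tendsto_nhds tendsto_id)
        rw [one_mul] at h1
        refine h1.congr' ?_
        filter_upwards [self_mem_nhdsWithin] with u hu
        exact div_mul_cancel₀ _ hu
      have hfv : Tendsto (fun u : ℂ => f (φ^[N] u)) (𝓝[≠] 0) (𝓝 (f 0)) :=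
        hc.tendsto.comp hv0
      have hmain : Tendsto
          (fun u : ℂ => f (φ^[N] u) * (φ^[N] u / u) ^ 2 + (φ^[N] u - u) / u ^ 2)
          (𝓝[≠] 0) (𝓝 (f 0 * 1 ^ 2 + (N : ℂ) * f 0)) :=
        (hfv.mul (haux.pow 2)).add ih
      rw [show f 0 * 1 ^ 2 + (N : ℂ) * f 0 = ((N + 1 : ℕ) : ℂ) * f 0 by push_cast; ring]
        at hmain
      refine hmain.congr ?_
      intro u
      rw [Function.iterate_succ_apply']
      have : φ (φ^[N] u) = φ^[N] u + (φ^[N] u) ^ 2 * f (φ^[N] u) := by rw [hφ]; ring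
      rw [this]
      rw [div_pow, add_sub_right_comm, add_div, mul_comm]
      ring
  intro N
  refine ⟨key N, ?_⟩
  have h1 : Tendsto (fun u : ℂ => 1 + u * ((φ^[N] u - u) / u ^ 2)) (𝓝[≠] 0)
      (𝓝 (1 + 0 * ((N : ℂ) * f 0))) :=
    tendsto_const_nhds.add ((tendsto_nhdsWithin_of_tendsto_nhds tendsto_id).mul (key N))
  rw [show (1 : ℂ) + 0 * ((N : ℂ) * f 0) = 1 by ring] at h1
  refine h1.congr' ?_
  filter_upwards [self_mem_nhdsWithin] with u hu
  have hu' : u ≠ 0 := hu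
  field_simp
  ring

-- unconditional semiconjugacy
lemma usemi (f : ℂ → ℂ) (q : ℂ × ℂ) :
    (Hmap f q).1 ^ 2 * (Hmap f q).2
      = (fun v : ℂ => v * (1 + v * f v)) (q.1 ^ 2 * q.2) := by
  obtain ⟨x, y⟩ := q
  simp only [Hmap]
  set a : ℂ := 1 + x ^ 2 * y * f (x ^ 2 * y) with ha
  rcases eq_or_ne a 0 with h | h
  · simp [h]
  · field_simp

lemma usemi_iter (f : ℂ → ℂ) (n : ℕ) (q : ℂ × ℂ) :
    ((Hmap f)^[n] q).1 ^ 2 * ((Hmap f)^[n] q).2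
      = (fun v : ℂ => v * (1 + v * f v))^[n] (q.1 ^ 2 * q.2) := by
  induction n with
  | zero => simp
  | succ n ih =>
    rw [Function.iterate_succ_apply', Function.iterate_succ_apply', ← ih]
    exact usemi f _

lemma germ_inj (f : ℂ → ℂ) (hc : ContinuousAt f 0) (hf0 : f 0 ≠ 0)
    {N M : ℕ} (h : (Hmap f)^[N] =ᶠ[𝓝 (0 : ℂ × ℂ)] (Hmap f)^[M]) : N = M := by
  set φ : ℂ → ℂ := fun v => v * (1 + v * f v) with hφ
  obtain ⟨ε, hε, hball⟩ := Metric.eventually_nhds_iff.mp h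
  have hφeq : ∀ v : ℂ, ‖v‖ < ε ^ 3 → φ^[N] v = φ^[M] v := by
    intro v hv
    obtain ⟨t, ht⟩ := IsAlgClosed.exists_pow_nat_eq v (n := 3) (by norm_num)
    have htn : ‖t‖ < ε := by
      by_contra hle
      push_neg at hle
      have : ε ^ 3 ≤ ‖t‖ ^ 3 := pow_le_pow_left₀ hε.le hle 3
      rw [← norm_pow, ht] at this
      linarith
    have hpt : dist ((t, t) : ℂ × ℂ) 0 < ε := by
      rw [dist_zero_right, Prod.norm_def]
      simpa using htn
    have := hball hpt
    have h1 := usemi_iter f N (t, t)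
    have h2 := usemi_iter f M (t, t)
    rw [this] at h1
    have huv : (t : ℂ) ^ 2 * t = v := by rw [← ht]; ring
    rw [huv] at h1 h2
    rw [← h1, ← h2]
  have heq : (fun u : ℂ => (φ^[N] u - u) / u ^ 2)
      =ᶠ[𝓝[≠] (0 : ℂ)] (fun u : ℂ => (φ^[M] u - u) / u ^ 2) := by
    have hb : Metric.ball (0:ℂ) (ε ^ 3) ∈ 𝓝[≠] (0:ℂ) :=
      nhdsWithin_le_nhds (Metric.ball_mem_nhds 0 (by positivity))
    filter_upwards [hb] with u hu
    rw [hφeq u (by simpa [dist_zero_right] using hu)]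
  have h1 := (parabolic_key f hc N).1
  have h2 := (parabolic_key f hc M).1
  have := tendsto_nhds_unique (h1.congr' heq) h2
  have : (N : ℂ) = M := mul_right_cancel₀ hf0 this
  exact_mod_cast this

/-- For `f` holomorphic near `0 ∈ ℂ` with `f 0 ≠ 0`, the germ
`H(x,y) = (x(1 + x²y f(x²y)), y(1 + x²y f(x²y))⁻¹)`, tangent to the identity, generates
a pseudogroup with finite orbits on a sufficiently small neighborhood of the origin,
while `H` is not periodic (no iterate `H^N`, `N ≥ 1`, is the identity near the origin);
in particular `H` generates an infinite subgroup of `Diff(ℂ²,0)` (the germs of the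
iterates of `H` are infinitely many). -/
theorem finite_orbits_not_periodic (f : ℂ → ℂ) (U : Set ℂ)
    (hU : U ∈ 𝓝 (0 : ℂ)) (hf : DifferentiableOn ℂ f U) (hf0 : f 0 ≠ 0) :
    (∃ V ∈ 𝓝 (0 : ℂ × ℂ), ∃ HInv : ℂ × ℂ → ℂ × ℂ,
      (∀ p ∈ V, HInv (Hmap f p) = p ∧ Hmap f (HInv p) = p) ∧
      ∀ p ∈ V, (pOrbit V (fun _ : Fin 1 => Hmap f) (fun _ => HInv) p).Finite)
    ∧ (∀ N : ℕ, 1 ≤ N → ¬ ((Hmap f)^[N] =ᶠ[𝓝 (0 : ℂ × ℂ)] id))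
    ∧ Set.Infinite (Set.range fun N : ℕ =>
        (Filter.Germ.ofFun ((Hmap f)^[N]) : Filter.Germ (𝓝 (0 : ℂ × ℂ)) (ℂ × ℂ))) := by
  have hfc : ContinuousAt f 0 := (hf.differentiableAt hU).continuousAt
  have hfa : AnalyticAt ℂ f 0 := hf.analyticAt hU
  set B : ℝ := ‖f 0‖ with hB
  have hBpos : 0 < B := norm_pos_iff.mpr hf0
  set φ : ℂ → ℂ := fun v => v * (1 + v * f v) with hφ
  have hφ0 : φ 0 = 0 := by simp [hφ]
  have hφa : AnalyticAt ℂ φ 0 := by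
    exact analyticAt_id.mul (analyticAt_const.add (analyticAt_id.mul hfa))
  have hd : HasDerivAt φ 1 0 := by
    have h1 : HasDerivAt (fun v : ℂ => v * f v) (1 * f 0 + 0 * deriv f 0) 0 :=
      (hasDerivAt_id 0).mul (hfa.differentiableAt.hasDerivAt)
    have h2 : HasDerivAt (fun v : ℂ => 1 + v * f v) (1 * f 0 + 0 * deriv f 0) 0 :=
      h1.const_add 1
    have h3 := (hasDerivAt_id 0).mul h2
    simp at h3; exact h3
  have hsd : HasStrictDerivAt φ 1 0 := by
    have h := hφa.hasStrictFDerivAt.hasStrictDerivAt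
    rwa [fderiv_apply_one_eq_deriv, hd.deriv] at h
  set ψ : ℂ → ℂ := HasStrictDerivAt.localInverse φ 1 0 hsd one_ne_zero with hψ
  have hψ_left : ∀ᶠ u in 𝓝 (0 : ℂ), ψ (φ u) = u :=
    (hsd.hasStrictFDerivAt_equiv one_ne_zero).eventually_left_inverse
  have hψ_right : ∀ᶠ v in 𝓝 (0 : ℂ), φ (ψ v) = v := by
    have := (hsd.hasStrictFDerivAt_equiv one_ne_zero).eventually_right_inverse
    rwa [hφ0] at this
  have hψ_cont : ContinuousAt ψ 0 := by
    have := (hsd.hasStrictFDerivAt_equiv one_ne_zero).localInverse_continuousAt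
    rwa [hφ0] at this
  have hψ0 : ψ 0 = 0 := by
    have := hψ_left.self_of_nhds
    rwa [hφ0] at this
  -- choose ρ₁
  obtain ⟨δ₁, hδ₁pos, hδ₁⟩ := Metric.continuousAt_iff.mp hfc (B / 8) (by positivity)
  set ρ₁ : ℝ := min δ₁ (1 / (16 * B + 1)) with hρ₁
  have hρ₁pos : 0 < ρ₁ := lt_min hδ₁pos (by positivity)
  have hρ₁f : ∀ u : ℂ, ‖u‖ < ρ₁ → ‖f u - f 0‖ < B / 8 := by
    intro u hu
    have := hδ₁ (x := u) (by simpa [dist_zero_right] using hu.trans_le (min_le_left _ _))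
    simpa [dist_eq_norm] using this
  have hρ₁small : ρ₁ ≤ 1 / (16 * B + 1) := min_le_right _ _
  -- the basic estimate
  have Est : ∀ u : ℂ, ‖u‖ < ρ₁ →
      (1 + u * f u) ≠ 0 ∧ (7 : ℝ) / 8 ≤ ‖1 + u * f u‖ ∧
      ‖f u / (1 + u * f u) - f 0‖ ≤ B / 2 := by
    intro u hu
    have h1 : ‖f u - f 0‖ < B / 8 := hρ₁f u hu
    have h2 : ‖f u‖ ≤ 2 * B := by
      have := norm_sub_norm_le (f u) (f 0)
      have hB' : ‖f 0‖ = B := rfl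
      rw [hB'] at this
      linarith
    have h3 : ‖u * f u‖ ≤ 1 / 8 := by
      rw [norm_mul]
      have hu' : ‖u‖ ≤ 1 / (16 * B + 1) := le_trans hu.le hρ₁small
      have h4 : ‖u‖ * ‖f u‖ ≤ (1 / (16 * B + 1)) * (2 * B) :=
        mul_le_mul hu' h2 (norm_nonneg _) (by positivity)
      have h5 : (1 / (16 * B + 1)) * (2 * B) ≤ 1 / 8 := by
        rw [div_mul_eq_mul_div, div_le_div_iff₀ (by positivity) (by norm_num)]
        nlinarith
      linarith
    have ha : (7 : ℝ) / 8 ≤ ‖1 + u * f u‖ := by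
      have := norm_add_le (1 + u * f u) (-(u * f u))
      simp only [add_neg_cancel_right, norm_neg, norm_one] at this
      linarith
    have ha0 : (1 + u * f u) ≠ 0 := by
      intro h; rw [h, norm_zero] at ha; linarith
    refine ⟨ha0, ha, ?_⟩
    have hid : f u / (1 + u * f u) - f 0
        = (f u - f 0 - f 0 * (u * f u)) / (1 + u * f u) := by
      rw [eq_div_iff ha0, sub_mul, div_mul_cancel₀ _ ha0]
      ring
    rw [hid, norm_div]
    have hnum : ‖f u - f 0 - f 0 * (u * f u)‖ ≤ B / 4 := by
      have := norm_sub_le (f u - f 0) (f 0 * (u * f u))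
      rw [norm_mul] at this
      have hB' : ‖f 0‖ = B := rfl
      rw [hB'] at this
      nlinarith [norm_nonneg (u * f u)]
    have h5 : ‖f u - f 0 - f 0 * (u * f u)‖ / ‖1 + u * f u‖ ≤ (B / 4) / (7 / 8) :=
      div_le_div₀ (by positivity) hnum (by norm_num) ha
    have h6 : (B / 4) / ((7 : ℝ) / 8) = B * (2 / 7) := by ring
    rw [h6] at h5
    linarith
  -- choose ρ₂
  have hball₁ : {w : ℂ | ‖w‖ < ρ₁} ∈ 𝓝 (0 : ℂ) := by
    have : Metric.ball (0 : ℂ) ρ₁ ∈ 𝓝 (0 : ℂ) := Metric.ball_mem_nhds 0 hρ₁pos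
    simpa [Metric.ball, dist_zero_right] using this
  have hψ_small : ∀ᶠ v in 𝓝 (0 : ℂ), ‖ψ v‖ < ρ₁ := by
    have := hψ_cont.preimage_mem_nhds (by rwa [hψ0])
    exact this
  obtain ⟨ρ₂, hρ₂pos, hρ₂⟩ := Metric.eventually_nhds_iff.mp
    (hψ_left.and (hψ_right.and hψ_small))
  have hρ₂' : ∀ v : ℂ, ‖v‖ < ρ₂ → ψ (φ v) = v ∧ φ (ψ v) = v ∧ ‖ψ v‖ < ρ₁ := by
    intro v hv
    exact hρ₂ (by simpa [dist_zero_right] using hv)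
  -- choose δ and V
  set δ : ℝ := min 1 (min ρ₁ ρ₂) with hδ
  have hδpos : 0 < δ := lt_min one_pos (lt_min hρ₁pos hρ₂pos)
  have hδ1 : δ ≤ 1 := min_le_left _ _
  have hδcube : δ ^ 3 ≤ δ := pow_le_of_le_one hδpos.le hδ1 (by norm_num)
  have hδρ₁ : δ ^ 3 ≤ ρ₁ :=
    hδcube.trans (le_trans (min_le_right _ _) (min_le_left _ _))
  have hδρ₂ : δ ^ 3 ≤ ρ₂ :=
    hδcube.trans (le_trans (min_le_right _ _) (min_le_right _ _))
  set V : Set (ℂ × ℂ) := Metric.ball (0 : ℂ × ℂ) δ with hV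
  have hVmem : V ∈ 𝓝 (0 : ℂ × ℂ) := Metric.ball_mem_nhds 0 hδpos
  have hVxy : ∀ p : ℂ × ℂ, p ∈ V → ‖p.1‖ < δ ∧ ‖p.2‖ < δ := by
    intro p hp
    rw [hV, Metric.mem_ball, dist_zero_right] at hp
    exact ⟨lt_of_le_of_lt (norm_fst_le p) hp, lt_of_le_of_lt (norm_snd_le p) hp⟩
  have hVu : ∀ p : ℂ × ℂ, p ∈ V → ‖p.1 ^ 2 * p.2‖ < δ ^ 3 := by
    intro p hp
    obtain ⟨h1, h2⟩ := hVxy p hp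
    rw [norm_mul, norm_pow]
    have h1' : ‖p.1‖ ^ 2 < δ ^ 2 := by nlinarith [norm_nonneg p.1]
    have h3' : ‖p.1‖ ^ 2 * ‖p.2‖ < δ ^ 2 * δ :=
      mul_lt_mul'' h1' h2 (by positivity) (norm_nonneg _)
    nlinarith
  have hVuρ₁ : ∀ p : ℂ × ℂ, p ∈ V → ‖p.1 ^ 2 * p.2‖ < ρ₁ :=
    fun p hp => lt_of_lt_of_le (hVu p hp) hδρ₁
  have hVuρ₂ : ∀ p : ℂ × ℂ, p ∈ V → ‖p.1 ^ 2 * p.2‖ < ρ₂ :=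
    fun p hp => lt_of_lt_of_le (hVu p hp) hδρ₂
  -- the inverse map
  set m : ℂ → ℂ := fun v => 1 + ψ v * f (ψ v) with hmdef
  set HInv : ℂ × ℂ → ℂ × ℂ :=
    fun p => (p.1 * (m (p.1 ^ 2 * p.2))⁻¹, p.2 * m (p.1 ^ 2 * p.2)) with hHInv
  have hm : ∀ v : ℂ, ‖v‖ < ρ₂ → m v ≠ 0 ∧ ψ v * m v = v ∧ v * (m v)⁻¹ = ψ v := by
    intro v hv
    obtain ⟨-, hri, hsm⟩ := hρ₂' v hv
    have hm0 : m v ≠ 0 := (Est (ψ v) hsm).1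
    have hψm : ψ v * m v = v := hri
    refine ⟨hm0, hψm, ?_⟩
    have h3 : v * (m v)⁻¹ = (ψ v * m v) * (m v)⁻¹ := by rw [hψm]
    rw [h3, mul_inv_cancel_right₀ hm0]
  have husemi : ∀ q : ℂ × ℂ, (Hmap f q).1 ^ 2 * (Hmap f q).2
      = (q.1 ^ 2 * q.2) * (1 + (q.1 ^ 2 * q.2) * f (q.1 ^ 2 * q.2)) := by
    intro q
    obtain ⟨x, y⟩ := q
    simp only [Hmap]
    rcases eq_or_ne (1 + x ^ 2 * y * f (x ^ 2 * y)) 0 with h | h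
    · rw [h]; simp [h]
    · field_simp
  -- left inverse
  have hleft : ∀ p ∈ V, HInv (Hmap f p) = p := by
    intro p hp
    obtain ⟨x, y⟩ := p
    have hu1 : ‖x ^ 2 * y‖ < ρ₁ := hVuρ₁ (x, y) hp
    have hu2 : ‖x ^ 2 * y‖ < ρ₂ := hVuρ₂ (x, y) hp
    have ha0 : (1 + (x ^ 2 * y) * f (x ^ 2 * y)) ≠ 0 := (Est _ hu1).1
    have hψφ : ψ ((x ^ 2 * y) * (1 + (x ^ 2 * y) * f (x ^ 2 * y))) = x ^ 2 * y :=
      (hρ₂' _ hu2).1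
    have h1 : Hmap f (x, y)
        = (x * (1 + (x ^ 2 * y) * f (x ^ 2 * y)), y * (1 + (x ^ 2 * y) * f (x ^ 2 * y))⁻¹) := rfl
    have hkey : (x * (1 + (x ^ 2 * y) * f (x ^ 2 * y))) ^ 2
          * (y * (1 + (x ^ 2 * y) * f (x ^ 2 * y))⁻¹)
        = (x ^ 2 * y) * (1 + (x ^ 2 * y) * f (x ^ 2 * y)) := by
      field_simp
    have hmφ : m ((x ^ 2 * y) * (1 + (x ^ 2 * y) * f (x ^ 2 * y)))
        = 1 + (x ^ 2 * y) * f (x ^ 2 * y) := by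
      show 1 + ψ _ * f (ψ _) = _
      rw [hψφ]
    have h2 : HInv (Hmap f (x, y))
        = ((x * (1 + (x ^ 2 * y) * f (x ^ 2 * y)))
             * (1 + (x ^ 2 * y) * f (x ^ 2 * y))⁻¹,
           (y * (1 + (x ^ 2 * y) * f (x ^ 2 * y))⁻¹)
             * (1 + (x ^ 2 * y) * f (x ^ 2 * y))) := by
      show ((Hmap f (x, y)).1 * (m ((Hmap f (x, y)).1 ^ 2 * (Hmap f (x, y)).2))⁻¹,
            (Hmap f (x, y)).2 * m ((Hmap f (x, y)).1 ^ 2 * (Hmap f (x, y)).2)) = _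
      rw [h1]
      simp only
      rw [hkey, hmφ]
    rw [h2, mul_inv_cancel_right₀ ha0, inv_mul_cancel_right₀ ha0]
  -- right inverse
  have hright : ∀ p ∈ V, Hmap f (HInv p) = p := by
    intro p hp
    obtain ⟨x, y⟩ := p
    have hu2 : ‖x ^ 2 * y‖ < ρ₂ := hVuρ₂ (x, y) hp
    obtain ⟨hm0, hψm, hvmi⟩ := hm (x ^ 2 * y) hu2
    have h1 : HInv (x, y) = (x * (m (x ^ 2 * y))⁻¹, y * m (x ^ 2 * y)) := rfl
    have hkey : (x * (m (x ^ 2 * y))⁻¹) ^ 2 * (y * m (x ^ 2 * y)) = ψ (x ^ 2 * y) := by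
      rw [← hvmi]
      field_simp
    have hmm : 1 + ψ (x ^ 2 * y) * f (ψ (x ^ 2 * y)) = m (x ^ 2 * y) := rfl
    have h2 : Hmap f (HInv (x, y))
        = ((x * (m (x ^ 2 * y))⁻¹) * m (x ^ 2 * y),
           (y * m (x ^ 2 * y)) * (m (x ^ 2 * y))⁻¹) := by
      rw [h1]
      show (_ * (1 + _ * f _), _ * (1 + _ * f _)⁻¹) = _
      rw [hkey, hmm]
    rw [h2, inv_mul_cancel_right₀ hm0, mul_inv_cancel_right₀ hm0]
  -- one forward step
  have stepF : ∀ p : ℂ × ℂ, p ∈ V → p.1 ≠ 0 → p.2 ≠ 0 →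
      (Hmap f p).1 ≠ 0 ∧ (Hmap f p).2 ≠ 0 ∧ (Hmap f p).1 * (Hmap f p).2 = p.1 * p.2 ∧
      ‖1 / (Hmap f p).1 - 1 / p.1 + (p.1 * p.2) * f 0‖ ≤ ‖p.1 * p.2‖ * (B / 2) := by
    intro p hp hx hy
    obtain ⟨x, y⟩ := p
    simp only at hx hy ⊢
    have hu1 : ‖x ^ 2 * y‖ < ρ₁ := hVuρ₁ (x, y) hp
    obtain ⟨ha0, -, hest⟩ := Est (x ^ 2 * y) hu1
    have h1 : Hmap f (x, y)
        = (x * (1 + (x ^ 2 * y) * f (x ^ 2 * y)), y * (1 + (x ^ 2 * y) * f (x ^ 2 * y))⁻¹) := rfl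
    rw [h1]
    refine ⟨mul_ne_zero hx ha0, mul_ne_zero hy (inv_ne_zero ha0),
      by field_simp, ?_⟩
    have hid : 1 / (x * (1 + (x ^ 2 * y) * f (x ^ 2 * y))) - 1 / x + (x * y) * f 0
        = (x * y) * (f 0 - f (x ^ 2 * y) / (1 + (x ^ 2 * y) * f (x ^ 2 * y))) := by
      field_simp
      ring
    rw [hid, norm_mul]
    refine mul_le_mul_of_nonneg_left ?_ (norm_nonneg _)
    rw [norm_sub_rev]
    exact hest
  -- one backward step
  have stepB : ∀ p : ℂ × ℂ, p ∈ V →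
      (HInv p).1 * (HInv p).2 = p.1 * p.2 ∧
      (p.1 ≠ 0 → (HInv p).1 ≠ 0) ∧ (p.2 ≠ 0 → (HInv p).2 ≠ 0) := by
    intro p hp
    obtain ⟨x, y⟩ := p
    have hu2 : ‖x ^ 2 * y‖ < ρ₂ := hVuρ₂ (x, y) hp
    obtain ⟨hm0, -, -⟩ := hm (x ^ 2 * y) hu2
    have h1 : HInv (x, y) = (x * (m (x ^ 2 * y))⁻¹, y * m (x ^ 2 * y)) := rfl
    rw [h1]
    exact ⟨by field_simp, fun h => mul_ne_zero h (inv_ne_zero hm0),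
      fun h => mul_ne_zero h hm0⟩
  -- forward chains are short
  have CB : ∀ q : ℂ × ℂ, q.1 ≠ 0 → q.2 ≠ 0 → ∀ n : ℕ,
      (∀ j, j ≤ n → (Hmap f)^[j] q ∈ V) → (n : ℝ) ≤ 4 * δ / (B * ‖q.1 * q.2‖ ^ 2) := by
    intro q hx hy n hchain
    set c : ℂ := q.1 * q.2 with hc
    have hc0 : c ≠ 0 := mul_ne_zero hx hy
    have hcpos : 0 < ‖c‖ := norm_pos_iff.mpr hc0
    have main : ∀ j, j ≤ n →
        ((Hmap f)^[j] q).1 ≠ 0 ∧ ((Hmap f)^[j] q).2 ≠ 0 ∧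
        ((Hmap f)^[j] q).1 * ((Hmap f)^[j] q).2 = c ∧
        ‖1 / ((Hmap f)^[j] q).1 - 1 / q.1 + (j : ℂ) * (c * f 0)‖
          ≤ (j : ℝ) * (‖c‖ * (B / 2)) := by
      intro j
      induction j with
      | zero => intro _; simp [hx, hy, hc]
      | succ j ih =>
        intro hjn
        obtain ⟨h1, h2, h3, h4⟩ := ih (le_of_lt (Nat.lt_of_succ_le hjn))
        have hjV : (Hmap f)^[j] q ∈ V := hchain j (le_of_lt (Nat.lt_of_succ_le hjn))
        obtain ⟨g1, g2, g3, g4⟩ := stepF _ hjV h1 h2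
        rw [h3] at g3 g4
        rw [Function.iterate_succ_apply']
        refine ⟨g1, g2, g3, ?_⟩
        have hsplit : 1 / (Hmap f ((Hmap f)^[j] q)).1 - 1 / q.1 + ((j + 1 : ℕ) : ℂ) * (c * f 0)
            = (1 / (Hmap f ((Hmap f)^[j] q)).1 - 1 / ((Hmap f)^[j] q).1 + c * f 0)
              + (1 / ((Hmap f)^[j] q).1 - 1 / q.1 + (j : ℂ) * (c * f 0)) := by
          push_cast
          ring
        rw [hsplit]
        calc ‖_ + _‖ ≤ _ + _ := norm_add_le _ _
          _ ≤ ‖c‖ * (B / 2) + (j : ℝ) * (‖c‖ * (B / 2)) := add_le_add g4 h4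
          _ = ((j + 1 : ℕ) : ℝ) * (‖c‖ * (B / 2)) := by push_cast; ring
    obtain ⟨h1, h2, h3, h4⟩ := main n le_rfl
    -- bound on 1/x along the orbit
    have hbound : ∀ j, j ≤ n → ‖1 / ((Hmap f)^[j] q).1‖ ≤ δ / ‖c‖ := by
      intro j hj
      obtain ⟨k1, k2, k3, -⟩ := main j hj
      have hyV : ‖((Hmap f)^[j] q).2‖ < δ := (hVxy _ (hchain j hj)).2
      have hinv : 1 / ((Hmap f)^[j] q).1 = ((Hmap f)^[j] q).2 / c := by
        rw [← k3]
        field_simp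
      rw [hinv, norm_div]
      gcongr
    have hx0 : ‖1 / q.1‖ ≤ δ / ‖c‖ := by simpa using hbound 0 (Nat.zero_le n)
    have hxn : ‖1 / ((Hmap f)^[n] q).1‖ ≤ δ / ‖c‖ := hbound n le_rfl
    have t1 : ‖(n : ℂ) * (c * f 0)‖
        ≤ ‖1 / ((Hmap f)^[n] q).1 - 1 / q.1 + (n : ℂ) * (c * f 0)‖
          + ‖1 / ((Hmap f)^[n] q).1 - 1 / q.1‖ := by
      have := norm_sub_le
        (1 / ((Hmap f)^[n] q).1 - 1 / q.1 + (n : ℂ) * (c * f 0))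
        (1 / ((Hmap f)^[n] q).1 - 1 / q.1)
      simpa using this
    have t2 : ‖1 / ((Hmap f)^[n] q).1 - 1 / q.1‖ ≤ δ / ‖c‖ + δ / ‖c‖ :=
      (norm_sub_le _ _).trans (add_le_add hxn hx0)
    have t3 : ‖(n : ℂ) * (c * f 0)‖ = (n : ℝ) * (‖c‖ * B) := by
      rw [norm_mul, norm_mul, Complex.norm_natCast]
    have t4 : (n : ℝ) * (‖c‖ * B) ≤ (n : ℝ) * (‖c‖ * (B / 2)) + (δ / ‖c‖ + δ / ‖c‖) := by
      rw [← t3]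
      exact t1.trans (add_le_add h4 t2)
    have hring : (n : ℝ) * (‖c‖ * B) = 2 * ((n : ℝ) * (‖c‖ * (B / 2))) := by ring
    have t5 : (n : ℝ) * (‖c‖ * (B / 2)) ≤ 2 * (δ / ‖c‖) := by linarith
    have t6 : ((n : ℝ) * (‖c‖ * (B / 2))) * ‖c‖ ≤ (2 * (δ / ‖c‖)) * ‖c‖ :=
      mul_le_mul_of_nonneg_right t5 hcpos.le
    have t7 : (2 * (δ / ‖c‖)) * ‖c‖ = 2 * δ := by
      rw [mul_assoc, div_mul_cancel₀ δ (ne_of_gt hcpos)]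
    rw [le_div_iff₀ (by positivity : (0:ℝ) < B * ‖c‖ ^ 2)]
    have t8 : ((n : ℝ) * (‖c‖ * (B / 2))) * ‖c‖ = (n : ℝ) * (B * ‖c‖ ^ 2) / 2 := by ring
    linarith
  -- backward chains are short
  have BCB : ∀ p : ℂ × ℂ, p.1 ≠ 0 → p.2 ≠ 0 → ∀ n : ℕ,
      (∀ j, j ≤ n → HInv^[j] p ∈ V) → (n : ℝ) ≤ 4 * δ / (B * ‖p.1 * p.2‖ ^ 2) := by
    intro p hx hy n hchain
    have hinvj : ∀ j, j ≤ n → (HInv^[j] p).1 ≠ 0 ∧ (HInv^[j] p).2 ≠ 0 ∧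
        (HInv^[j] p).1 * (HInv^[j] p).2 = p.1 * p.2 := by
      intro j
      induction j with
      | zero => intro _; exact ⟨hx, hy, rfl⟩
      | succ j ih =>
        intro hjn
        obtain ⟨h1, h2, h3⟩ := ih (Nat.le_of_succ_le hjn)
        have hjV := hchain j (Nat.le_of_succ_le hjn)
        obtain ⟨g3, g1, g2⟩ := stepB _ hjV
        rw [Function.iterate_succ_apply']
        exact ⟨g1 h1, g2 h2, by rw [g3, h3]⟩
    obtain ⟨hq1, hq2, hq3⟩ := hinvj n le_rfl
    have hconv : ∀ j, j ≤ n → (Hmap f)^[j] (HInv^[n] p) = HInv^[n - j] p := by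
      intro j
      induction j with
      | zero => intro _; simp
      | succ j ih =>
        intro hjn
        have hj' : j ≤ n := Nat.le_of_succ_le hjn
        rw [Function.iterate_succ_apply', ih hj']
        have hsplit : HInv^[n - j] p = HInv (HInv^[n - (j + 1)] p) := by
          rw [show n - j = (n - (j + 1)) + 1 from by omega,
            Function.iterate_succ_apply']
        rw [hsplit, hright _ (hchain _ (by omega))]
    have hchain' : ∀ j, j ≤ n → (Hmap f)^[j] (HInv^[n] p) ∈ V := by
      intro j hj
      rw [hconv j hj]
      exact hchain _ (by omega)
    have hres := CB (HInv^[n] p) hq1 hq2 n hchain'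
    rwa [hq3] at hres
  -- finiteness of all orbits
  have orbitFin : ∀ p ∈ V, (pOrbit V (fun _ : Fin 1 => Hmap f) (fun _ => HInv) p).Finite := by
    intro p hp
    by_cases hdeg : p.1 = 0 ∨ p.2 = 0
    · -- p is on the axes: it is a fixed point of both maps
      have hu0 : p.1 ^ 2 * p.2 = 0 := by
        rcases hdeg with h | h <;> rw [h] <;> ring
      have hfix1 : Hmap f p = p := by
        show (p.1 * (1 + p.1 ^ 2 * p.2 * f (p.1 ^ 2 * p.2)),
              p.2 * (1 + p.1 ^ 2 * p.2 * f (p.1 ^ 2 * p.2))⁻¹) = p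
        rw [hu0]
        simp
      have hfix2 : HInv p = p := by
        show (p.1 * (m (p.1 ^ 2 * p.2))⁻¹, p.2 * m (p.1 ^ 2 * p.2)) = p
        have hm1 : m (p.1 ^ 2 * p.2) = 1 := by
          show 1 + ψ (p.1 ^ 2 * p.2) * f (ψ (p.1 ^ 2 * p.2)) = 1
          rw [hu0, hψ0]
          simp
        rw [hm1]
        simp
      refine Set.Finite.subset (Set.finite_singleton p) ?_
      rintro q ⟨w, -, rfl⟩
      rw [fixed_wordEval (fun _ : Fin 1 => Hmap f) (fun _ => HInv) p
        (fun _ => hfix1) (fun _ => hfix2) w]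
      exact rfl
    · push_neg at hdeg
      obtain ⟨hx, hy⟩ := hdeg
      set K : ℕ := Nat.floor (4 * δ / (B * ‖p.1 * p.2‖ ^ 2)) with hK
      refine Set.Finite.subset (Set.Finite.union
        ((Set.finite_Iic K).image (fun k => (Hmap f)^[k] p))
        ((Set.finite_Iic K).image (fun k => HInv^[k] p))) ?_
      rintro q ⟨w, hdom, rfl⟩
      have hqV : wordEval (fun _ : Fin 1 => Hmap f) (fun _ => HInv) w p ∈ V :=
        wordEval_mem V _ _ w p hdom
      have hgood := good_step V (Hmap f) HInv hleft hright p w p hdom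
        (Or.inl ⟨0, fun j hj => absurd hj (Nat.not_lt_zero j), by simp⟩)
      rcases hgood with ⟨k, ch, hk⟩ | ⟨k, ch, hk⟩
      · left
        have hchain : ∀ j, j ≤ k → (Hmap f)^[j] p ∈ V := by
          intro j hj
          rcases lt_or_eq_of_le hj with h | h
          · exact ch j h
          · rw [h, ← hk]; exact hqV
        exact ⟨k, Set.mem_Iic.mpr (Nat.le_floor (CB p hx hy k hchain)), hk.symm⟩
      · right
        have hchain : ∀ j, j ≤ k → HInv^[j] p ∈ V := by
          intro j hj
          rcases lt_or_eq_of_le hj with h | h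
          · exact ch j h
          · rw [h, ← hk]; exact hqV
        exact ⟨k, Set.mem_Iic.mpr (Nat.le_floor (BCB p hx hy k hchain)), hk.symm⟩
  refine ⟨⟨V, hVmem, HInv, fun p hp => ⟨hleft p hp, hright p hp⟩, orbitFin⟩, ?_, ?_⟩
  · intro N hN hid
    have hNM : N = 0 := by
      refine germ_inj f hfc hf0 (N := N) (M := 0) ?_
      rw [Function.iterate_zero]
      exact hid
    omega
  · apply Set.infinite_range_of_injective
    intro N M h
    exact germ_inj f hfc hf0 (Filter.Germ.coe_eq.mp h)
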